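/- Fix ε, a ∈ ℂ with ε² = 1, and let x > 0. Let u, E, p, q : (0,∞) → ℂ be differentiable at x with u(x) ≠ 0 and E(x) ≠ 0, and suppose that equations (iii) and (v) of the D7 compatibility system with parameters (ε, a) hold at x. Then −i·u(x)E'(x)/E(x) = −(i/2)x·p(x)/E(x) + (i/2)x·q(x)E(x). Equivalently, the quantity uφ' = −iuE'/E satisfies uφ' − 2au/x = −2au/x − (i/2)xp/E + (i/2)xqE, i.e., the integration constant b = uφ' − 2au/x admits the derivative-free expression b = −2au/x − (i/2)xp e^{−iφ} + (i/2)xq e^{iφ}. -/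

import Mathlib

/-- From equations (iii) and (v) of the D7 compatibility system with parameters
`(ε, a)` (with `ε² = 1`) one gets the derivative-free expression
`−i u E'/E = −(i/2) x p/E + (i/2) x q E` for the quantity `uφ' = −iuE'/E`;
equivalently, the integration constant `b = uφ' − 2au/x` admits the derivative-free
expression `b = −2au/x − (i/2)xp e^{−iφ} + (i/2)xq e^{iφ}`. -/
theorem stmt_5 (ε a : ℂ) (hε : ε ^ 2 = 1) (x : ℝ) (hx : 0 < x)
    (u E p q : ℝ → ℂ)
    (hu : DifferentiableAt ℝ u x) (hE : DifferentiableAt ℝ E x)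
    (hp : DifferentiableAt ℝ p x) (hq : DifferentiableAt ℝ q x)
    (hux : u x ≠ 0) (hEx : E x ≠ 0)
    (h3 : (Complex.I / 2) * u x * deriv E x + (Complex.I / 2) * deriv u x * E x
      - (Complex.I / (2 * (x : ℂ))) * u x * E x
      - (Complex.I * ε ^ 2 / 2) * (x : ℂ) * p x = 0)
    (h5 : (Complex.I / 2) * u x * deriv E x / (E x) ^ 2
      - (Complex.I / 2) * deriv u x / E x
      + (Complex.I / (2 * (x : ℂ))) * u x / E x
      + (Complex.I * ε ^ 2 / 2) * (x : ℂ) * q x = 0) :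
    -Complex.I * u x * deriv E x / E x =
      -(Complex.I / 2) * (x : ℂ) * p x / E x
        + (Complex.I / 2) * (x : ℂ) * q x * E x := by
  have hxc : (x : ℂ) ≠ 0 := by exact_mod_cast hx.ne'
  rw [hε] at h3 h5
  -- clear denominators in h5
  have h5c : (Complex.I / 2) * u x * deriv E x / (E x) ^ 2
      - (Complex.I / 2) * deriv u x / E x
      + (Complex.I / (2 * (x : ℂ))) * u x / E x
      = -((Complex.I / 2) * (x : ℂ) * q x) := by linear_combination h5
  field_simp at h5c
  -- clear denominators in h3
  have h3c : (Complex.I / 2) * u x * deriv E x + (Complex.I / 2) * deriv u x * E x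
      - (Complex.I / (2 * (x : ℂ))) * u x * E x
      = (Complex.I / 2) * (x : ℂ) * p x := by linear_combination h3
  field_simp at h3c
  -- clear denominators in the goal and finish
  have hne : (8:ℂ) * (x:ℂ) * E x ^ 3 ≠ 0 := by simp [hEx, hxc]
  have key : (-Complex.I * u x * deriv E x / E x) * (8*(x:ℂ)*E x^3)
      = (-(Complex.I / 2) * (x : ℂ) * p x / E x
        + (Complex.I / 2) * (x : ℂ) * q x * E x) * (8*(x:ℂ)*E x^3) := by
    field_simp
    apply mul_left_cancel₀ hxc
    linear_combination (-1) * h3c + (-1) * h5c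
  exact mul_right_cancel₀ hne key
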